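/- arXiv:2007.08316 — 2 statements merged into one kernel-verified Lean document; each statement's English description precedes it below -/
import Mathlib

section
/- Let 0 < α < β, let g : [α,β] → ℂ be real-valued and continuously differentiable with g(α) = 1 and g(β) = −1, and set M_g = max_{[α,β]} |g| and M_{g′} = max_{[α,β]} |g′|. Let λ ∈ ℝ and let u, v, f : [α,β] → ℂ be continuously differentiable with i λ u′(x) − v′(x) = f′(x) for all x ∈ (α,β). Then |v(β)|² + |v(α)|² ≤ M_{g′} ∫_α^β |v|² dx + 2|λ| M_g (∫_α^β |u′|² dx)^{1/2} (∫_α^β |v|² dx)^{1/2} + 2 M_g (∫_α^β |f′|² dx)^{1/2} (∫_α^β |v|² dx)^{1/2}. -/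
open MeasureTheory Complex

lemma memL2_aux {a b : ℝ} {F : ℝ → ℂ} (hF : ContinuousOn F (Set.Icc a b)) :
    MemLp F (ENNReal.ofReal 2) (volume.restrict (Set.Ioc a b)) := by
  haveI : IsFiniteMeasure (volume.restrict (Set.Ioc a b)) :=
    ⟨by rw [Measure.restrict_apply_univ]; simp [Real.volume_Ioc]⟩
  obtain ⟨C, hC⟩ := (isCompact_Icc : IsCompact (Set.Icc a b)).exists_bound_of_continuousOn hF
  refine MemLp.of_bound ?_ C ?_
  · exact (hF.mono Set.Ioc_subset_Icc_self).aestronglyMeasurable measurableSet_Ioc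
  · exact (ae_restrict_iff' measurableSet_Ioc).2
      (Filter.Eventually.of_forall fun x hx => hC x (Set.Ioc_subset_Icc_self hx))

lemma cs_aux {a b : ℝ} (hab : a ≤ b) {F G : ℝ → ℂ}
    (hF : ContinuousOn F (Set.Icc a b)) (hG : ContinuousOn G (Set.Icc a b)) :
    ∫ x in a..b, ‖F x‖ * ‖G x‖ ≤
      Real.sqrt (∫ x in a..b, ‖F x‖ ^ 2) * Real.sqrt (∫ x in a..b, ‖G x‖ ^ 2) := by
  have h2 : (2:ℝ).HolderConjugate 2 := Real.HolderConjugate.two_two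
  have key := MeasureTheory.integral_mul_norm_le_Lp_mul_Lq h2 (memL2_aux hF) (memL2_aux hG)
  have e2 : ∀ t : ℝ, t ^ (2:ℝ) = t ^ 2 := fun t => by
    rw [show (2:ℝ) = ((2:ℕ):ℝ) by norm_num, Real.rpow_natCast]
  simp_rw [e2] at key
  rw [intervalIntegral.integral_of_le hab, intervalIntegral.integral_of_le hab,
    intervalIntegral.integral_of_le hab, Real.sqrt_eq_rpow, Real.sqrt_eq_rpow]
  exact key

lemma deriv_gnormsq {g g' : ℝ → ℝ} {v v' : ℝ → ℂ} {x : ℝ}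
    (hgx : HasDerivAt g (g' x) x) (hvx : HasDerivAt v (v' x) x) :
    HasDerivAt (fun y => g y * ‖v y‖ ^ 2)
      (g' x * ‖v x‖ ^ 2 + g x * (2 * ((starRingEnd ℂ) (v x) * v' x).re)) x := by
  have hconj : HasDerivAt (fun y => (starRingEnd ℂ) (v y)) ((starRingEnd ℂ) (v' x)) x :=
    Complex.conjCLE.toContinuousLinearMap.hasFDerivAt.comp_hasDerivAt x hvx
  have hmul := hconj.mul hvx
  have hre := Complex.reCLM.hasFDerivAt.comp_hasDerivAt x hmul
  have hfun : (fun y => Complex.reCLM ((starRingEnd ℂ) (v y) * v y)) = fun y => ‖v y‖ ^ 2 := by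
    funext y
    show ((starRingEnd ℂ) (v y) * v y).re = ‖v y‖ ^ 2
    rw [mul_comm, Complex.mul_conj]
    simp [Complex.normSq_eq_norm_sq, ← Complex.ofReal_pow]
  have hval : Complex.reCLM ((starRingEnd ℂ) (v' x) * v x + (starRingEnd ℂ) (v x) * v' x)
      = 2 * ((starRingEnd ℂ) (v x) * v' x).re := by
    show ((starRingEnd ℂ) (v' x) * v x + (starRingEnd ℂ) (v x) * v' x).re = _
    have h1 : (starRingEnd ℂ) (v' x) * v x = (starRingEnd ℂ) ((starRingEnd ℂ) (v x) * v' x) := by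
      rw [map_mul]; simp [mul_comm]
    rw [Complex.add_re, h1, Complex.conj_re]; ring
  simp only [Function.comp_def, Pi.mul_apply] at hre
  rw [hfun, hval] at hre
  exact hgx.mul hre

/-- Boundary-trace estimate for the velocity `v` from the differentiated resolvent
equation `iλu′ − v′ = f′` on `(α,β)`, via the multiplier `2 g v̄`. -/
theorem stmt_7 (α β lam Mg Mg' : ℝ) (hα : 0 < α) (hαβ : α < β)
    (g g' : ℝ → ℝ)
    (hg : ∀ x ∈ Set.Icc α β, HasDerivAt g (g' x) x)
    (hg'c : ContinuousOn g' (Set.Icc α β))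
    (hgα : g α = 1) (hgβ : g β = -1)
    (hMg : IsGreatest ((fun x => |g x|) '' Set.Icc α β) Mg)
    (hMg' : IsGreatest ((fun x => |g' x|) '' Set.Icc α β) Mg')
    (u v f u' v' f' : ℝ → ℂ)
    (hu : ∀ x ∈ Set.Icc α β, HasDerivAt u (u' x) x)
    (hv : ∀ x ∈ Set.Icc α β, HasDerivAt v (v' x) x)
    (hf : ∀ x ∈ Set.Icc α β, HasDerivAt f (f' x) x)
    (hu'c : ContinuousOn u' (Set.Icc α β))
    (hv'c : ContinuousOn v' (Set.Icc α β))
    (hf'c : ContinuousOn f' (Set.Icc α β))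
    (heq : ∀ x ∈ Set.Ioo α β, Complex.I * (lam : ℂ) * u' x - v' x = f' x) :
    ‖v β‖ ^ 2 + ‖v α‖ ^ 2 ≤
      Mg' * (∫ x in α..β, ‖v x‖ ^ 2)
        + 2 * |lam| * Mg * Real.sqrt (∫ x in α..β, ‖u' x‖ ^ 2)
            * Real.sqrt (∫ x in α..β, ‖v x‖ ^ 2)
        + 2 * Mg * Real.sqrt (∫ x in α..β, ‖f' x‖ ^ 2)
            * Real.sqrt (∫ x in α..β, ‖v x‖ ^ 2) := by
  have hab : α ≤ β := hαβ.le
  have hαmem : α ∈ Set.Icc α β := Set.left_mem_Icc.2 hab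
  have hβmem : β ∈ Set.Icc α β := Set.right_mem_Icc.2 hab
  have hMg0 : 0 ≤ Mg := le_trans (abs_nonneg (g α)) (hMg.2 ⟨α, hαmem, rfl⟩)
  have hMg'0 : 0 ≤ Mg' := le_trans (abs_nonneg _) (hMg'.2 ⟨α, hαmem, rfl⟩)
  -- continuity facts
  have hgc : ContinuousOn g (Set.Icc α β) := fun x hx =>
    (hg x hx).continuousAt.continuousWithinAt
  have hvc : ContinuousOn v (Set.Icc α β) := fun x hx =>
    (hv x hx).continuousAt.continuousWithinAt
  set φ' : ℝ → ℝ := fun x => g' x * ‖v x‖ ^ 2 + g x * (2 * ((starRingEnd ℂ) (v x) * v' x).re)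
    with hφ'def
  have hnc : ContinuousOn (fun x => ‖v x‖ ^ 2) (Set.Icc α β) := (hvc.norm.pow 2)
  have hφ'c : ContinuousOn φ' (Set.Icc α β) := by
    apply (hg'c.mul hnc).add
    apply hgc.mul
    apply ContinuousOn.mul continuousOn_const
    exact Complex.continuous_re.comp_continuousOn
      ((continuous_star.comp_continuousOn hvc).mul hv'c)
  -- FTC
  have hFTC : ∫ x in α..β, φ' x = -‖v β‖ ^ 2 - ‖v α‖ ^ 2 := by
    have := intervalIntegral.integral_eq_sub_of_hasDerivAt (f := fun y => g y * ‖v y‖ ^ 2)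
      (f' := φ') (fun x hx => by
        rw [Set.uIcc_of_le hab] at hx
        exact deriv_gnormsq (hg x hx) (hv x hx))
      ((hφ'c.mono (by rw [Set.uIcc_of_le hab])).intervalIntegrable)
    rw [this]; simp only [hgβ, hgα]; ring
  -- the integrand with v' replaced via the equation
  set E : ℝ → ℝ := fun x =>
    -(g' x * ‖v x‖ ^ 2) - g x * (2 * ((starRingEnd ℂ) (v x) * (Complex.I * lam * u' x - f' x)).re)
    with hEdef
  have hcongr : ∫ x in α..β, -φ' x = ∫ x in α..β, E x := by
    apply intervalIntegral.integral_congr_ae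
    have h0 : ∀ᵐ x : ℝ, x ∉ ({β} : Set ℝ) :=
      measure_eq_zero_iff_ae_notMem.1 Real.volume_singleton
    filter_upwards [h0] with x hx hx2
    rw [Set.uIoc_of_le hab] at hx2
    have hxIoo : x ∈ Set.Ioo α β := ⟨hx2.1, lt_of_le_of_ne hx2.2 (by simpa using hx)⟩
    have hveq : v' x = Complex.I * lam * u' x - f' x := by
      have := heq x hxIoo; linear_combination -this
    rw [hEdef, hφ'def]
    simp only [hveq]
    ring
  set B : ℝ → ℝ := fun x =>
    Mg' * ‖v x‖ ^ 2 + 2 * |lam| * Mg * (‖u' x‖ * ‖v x‖) + 2 * Mg * (‖f' x‖ * ‖v x‖) with hBdef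
  have hEc : ContinuousOn E (Set.Icc α β) := by
    apply ((hg'c.mul hnc).neg).sub
    apply hgc.mul
    apply ContinuousOn.mul continuousOn_const
    apply Complex.continuous_re.comp_continuousOn
    exact (continuous_star.comp_continuousOn hvc).mul
      ((continuousOn_const.mul hu'c).sub hf'c)
  have hBc : ContinuousOn B (Set.Icc α β) := by
    apply ContinuousOn.add
    apply ContinuousOn.add
    · exact continuousOn_const.mul hnc
    · exact continuousOn_const.mul (hu'c.norm.mul hvc.norm)
    · exact continuousOn_const.mul (hf'c.norm.mul hvc.norm)
  have hEB : ∀ x ∈ Set.Icc α β, E x ≤ B x := by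
    intro x hx
    have h1 : |g' x| ≤ Mg' := hMg'.2 ⟨x, hx, rfl⟩
    have h2 : |g x| ≤ Mg := hMg.2 ⟨x, hx, rfl⟩
    set z : ℂ := (starRingEnd ℂ) (v x) * (Complex.I * lam * u' x - f' x) with hz
    have hzre : |z.re| ≤ ‖z‖ := Complex.abs_re_le_norm z
    have hznorm : ‖z‖ ≤ ‖v x‖ * (|lam| * ‖u' x‖ + ‖f' x‖) := by
      rw [hz, norm_mul, RCLike.norm_conj]
      apply mul_le_mul_of_nonneg_left _ (norm_nonneg _)
      refine le_trans (norm_sub_le _ _) ?_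
      rw [norm_mul, norm_mul, Complex.norm_I, one_mul, Complex.norm_real, Real.norm_eq_abs]
    have hn0 : (0:ℝ) ≤ ‖v x‖ ^ 2 := sq_nonneg _
    have t1 : -(g' x * ‖v x‖ ^ 2) ≤ Mg' * ‖v x‖ ^ 2 := by
      rw [neg_mul_eq_neg_mul]
      exact mul_le_mul_of_nonneg_right (le_trans (neg_le_abs _) h1) hn0
    have t2 : -(g x * (2 * z.re)) ≤ 2 * Mg * ‖z‖ := by
      calc -(g x * (2 * z.re)) ≤ |g x * (2 * z.re)| := neg_le_abs _
        _ = |g x| * (2 * |z.re|) := by rw [abs_mul, abs_mul]; norm_num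
        _ ≤ Mg * (2 * ‖z‖) :=
            mul_le_mul h2 (by linarith) (by positivity) hMg0
        _ = 2 * Mg * ‖z‖ := by ring
    have t4 : 2 * Mg * ‖z‖ ≤ 2 * Mg * (‖v x‖ * (|lam| * ‖u' x‖ + ‖f' x‖)) :=
      mul_le_mul_of_nonneg_left hznorm (by linarith)
    have t5 : 2 * Mg * (‖v x‖ * (|lam| * ‖u' x‖ + ‖f' x‖))
        = 2 * |lam| * Mg * (‖u' x‖ * ‖v x‖) + 2 * Mg * (‖f' x‖ * ‖v x‖) := by ring
    simp only [hEdef, hBdef]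
    linarith
  have huIcc : Set.uIcc α β = Set.Icc α β := Set.uIcc_of_le hab
  have hEint : IntervalIntegrable E volume α β :=
    (hEc.mono (by rw [huIcc])).intervalIntegrable
  have hBint : IntervalIntegrable B volume α β :=
    (hBc.mono (by rw [huIcc])).intervalIntegrable
  have hmono : ∫ x in α..β, E x ≤ ∫ x in α..β, B x :=
    intervalIntegral.integral_mono_on hab hEint hBint hEB
  have hL : ‖v β‖ ^ 2 + ‖v α‖ ^ 2 = ∫ x in α..β, -φ' x := by
    rw [intervalIntegral.integral_neg, hFTC]; ring
  have hi1 : IntervalIntegrable (fun x => Mg' * ‖v x‖ ^ 2) volume α β :=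
    ((continuousOn_const.mul hnc).mono (by rw [huIcc])).intervalIntegrable
  have hi2 : IntervalIntegrable (fun x => 2 * |lam| * Mg * (‖u' x‖ * ‖v x‖)) volume α β :=
    ((continuousOn_const.mul (hu'c.norm.mul hvc.norm)).mono (by rw [huIcc])).intervalIntegrable
  have hi3 : IntervalIntegrable (fun x => 2 * Mg * (‖f' x‖ * ‖v x‖)) volume α β :=
    ((continuousOn_const.mul (hf'c.norm.mul hvc.norm)).mono (by rw [huIcc])).intervalIntegrable
  have hsplit : ∫ x in α..β, B x
      = Mg' * (∫ x in α..β, ‖v x‖ ^ 2)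
        + 2 * |lam| * Mg * (∫ x in α..β, ‖u' x‖ * ‖v x‖)
        + 2 * Mg * (∫ x in α..β, ‖f' x‖ * ‖v x‖) := by
    simp only [hBdef]
    rw [intervalIntegral.integral_add (hi1.add hi2) hi3,
      intervalIntegral.integral_add hi1 hi2,
      intervalIntegral.integral_const_mul, intervalIntegral.integral_const_mul,
      intervalIntegral.integral_const_mul]
  have csu := cs_aux hab hu'c hvc
  have csf := cs_aux hab hf'c hvc
  have hfin : Mg' * (∫ x in α..β, ‖v x‖ ^ 2)
        + 2 * |lam| * Mg * (∫ x in α..β, ‖u' x‖ * ‖v x‖)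
        + 2 * Mg * (∫ x in α..β, ‖f' x‖ * ‖v x‖)
      ≤ Mg' * (∫ x in α..β, ‖v x‖ ^ 2)
        + 2 * |lam| * Mg * Real.sqrt (∫ x in α..β, ‖u' x‖ ^ 2)
            * Real.sqrt (∫ x in α..β, ‖v x‖ ^ 2)
        + 2 * Mg * Real.sqrt (∫ x in α..β, ‖f' x‖ ^ 2)
            * Real.sqrt (∫ x in α..β, ‖v x‖ ^ 2) := by
    have h2lm : (0:ℝ) ≤ 2 * |lam| * Mg := by positivity
    have h2m : (0:ℝ) ≤ 2 * Mg := by linarith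
    nlinarith [mul_le_mul_of_nonneg_left csu h2lm, mul_le_mul_of_nonneg_left csf h2m]
  calc ‖v β‖ ^ 2 + ‖v α‖ ^ 2 = ∫ x in α..β, -φ' x := hL
    _ = ∫ x in α..β, E x := hcongr
    _ ≤ ∫ x in α..β, B x := hmono
    _ = _ := hsplit
    _ ≤ _ := hfin
end

section
/- Let 0 < α < β, let g : [α,β] → ℂ be real-valued and continuously differentiable with g(α) = 1 and g(β) = −1, and set M_g = max_{[α,β]} |g| and M_{g′} = max_{[α,β]} |g′|. Let λ ∈ ℝ, c₀ > 0, let S : [α,β] → ℂ be continuously differentiable, and let v, z, f : [α,β] → ℂ be continuous with i λ v(x) − S′(x) + c₀ z(x) = f(x) for all x ∈ (α,β). Then |S(β)|² + |S(α)|² ≤ M_{g′} ∫_α^β |S|² dx + 2|λ| M_g (∫_α^β |S|² dx)^{1/2} (∫_α^β |v|² dx)^{1/2} + 2 c₀ M_g (∫_α^β |S|² dx)^{1/2} (∫_α^β |z|² dx)^{1/2} + 2 M_g (∫_α^β |S|² dx)^{1/2} (∫_α^β |f|² dx)^{1/2}. -/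
open MeasureTheory Complex

private lemma memL2_of_contOn {a b : ℝ} {u : ℝ → ℝ}
    (hu : ContinuousOn u (Set.Icc a b)) :
    MemLp u (ENNReal.ofReal 2) (volume.restrict (Set.Ioc a b)) := by
  have hfin : IsFiniteMeasure (volume.restrict (Set.Ioc a b)) := by
    constructor
    rw [Measure.restrict_apply_univ, Real.volume_Ioc]
    exact ENNReal.ofReal_lt_top
  obtain ⟨C, hC⟩ := isCompact_Icc.exists_bound_of_continuousOn hu
  exact MemLp.of_bound
    ((hu.mono Set.Ioc_subset_Icc_self).aestronglyMeasurable measurableSet_Ioc) C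
    ((ae_restrict_iff' measurableSet_Ioc).2
      (Filter.Eventually.of_forall fun x hx => hC x (Set.Ioc_subset_Icc_self hx)))

/-- Cauchy–Schwarz for interval integrals of norms of continuous functions. -/
private lemma cs_int {a b : ℝ} (hab : a ≤ b) {u w : ℝ → ℂ}
    (hu : ContinuousOn u (Set.Icc a b)) (hw : ContinuousOn w (Set.Icc a b)) :
    ∫ x in a..b, ‖u x‖ * ‖w x‖ ≤
      Real.sqrt (∫ x in a..b, ‖u x‖ ^ 2) * Real.sqrt (∫ x in a..b, ‖w x‖ ^ 2) := by
  rw [intervalIntegral.integral_of_le hab, intervalIntegral.integral_of_le hab,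
    intervalIntegral.integral_of_le hab]
  have h2 : (2 : ℝ).HolderConjugate 2 := ⟨by norm_num, by norm_num, by norm_num⟩
  have hnn : ∀ {p : ℝ → ℂ}, (0 : ℝ → ℝ) ≤ᵐ[volume.restrict (Set.Ioc a b)] fun x => ‖p x‖ :=
    fun {p} => Filter.Eventually.of_forall fun x => norm_nonneg _
  have key := integral_mul_le_Lp_mul_Lq_of_nonneg h2 hnn hnn
    (memL2_of_contOn hu.norm) (memL2_of_contOn hw.norm)
  calc ∫ x in Set.Ioc a b, ‖u x‖ * ‖w x‖
      ≤ (∫ x in Set.Ioc a b, ‖u x‖ ^ (2:ℝ)) ^ (1/(2:ℝ))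
        * (∫ x in Set.Ioc a b, ‖w x‖ ^ (2:ℝ)) ^ (1/(2:ℝ)) := key
    _ = Real.sqrt (∫ x in Set.Ioc a b, ‖u x‖ ^ 2)
        * Real.sqrt (∫ x in Set.Ioc a b, ‖w x‖ ^ 2) := by
        rw [← Real.sqrt_eq_rpow, ← Real.sqrt_eq_rpow]
        norm_num [Real.rpow_two]

/-- Boundary-trace estimate for the total stress `S` from the resolvent equation
`iλv − S′ + c₀z = f` on `(α,β)`, via the multiplier `2 g S̄`. -/
theorem stmt_8 (α β lam c₀ Mg Mg' : ℝ) (hα : 0 < α) (hαβ : α < β) (hc₀ : 0 < c₀)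
    (g g' : ℝ → ℝ)
    (hg : ∀ x ∈ Set.Icc α β, HasDerivAt g (g' x) x)
    (hg'c : ContinuousOn g' (Set.Icc α β))
    (hgα : g α = 1) (hgβ : g β = -1)
    (hMg : IsGreatest ((fun x => |g x|) '' Set.Icc α β) Mg)
    (hMg' : IsGreatest ((fun x => |g' x|) '' Set.Icc α β) Mg')
    (S S' v z f : ℝ → ℂ)
    (hS : ∀ x ∈ Set.Icc α β, HasDerivAt S (S' x) x)
    (hS'c : ContinuousOn S' (Set.Icc α β))
    (hvc : ContinuousOn v (Set.Icc α β))
    (hzc : ContinuousOn z (Set.Icc α β))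
    (hfc : ContinuousOn f (Set.Icc α β))
    (heq : ∀ x ∈ Set.Ioo α β,
      Complex.I * (lam : ℂ) * v x - S' x + (c₀ : ℂ) * z x = f x) :
    ‖S β‖ ^ 2 + ‖S α‖ ^ 2 ≤
      Mg' * (∫ x in α..β, ‖S x‖ ^ 2)
        + 2 * |lam| * Mg * Real.sqrt (∫ x in α..β, ‖S x‖ ^ 2)
            * Real.sqrt (∫ x in α..β, ‖v x‖ ^ 2)
        + 2 * c₀ * Mg * Real.sqrt (∫ x in α..β, ‖S x‖ ^ 2)
            * Real.sqrt (∫ x in α..β, ‖z x‖ ^ 2)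
        + 2 * Mg * Real.sqrt (∫ x in α..β, ‖S x‖ ^ 2)
            * Real.sqrt (∫ x in α..β, ‖f x‖ ^ 2) := by
  have hab : α ≤ β := hαβ.le
  have hicc : Set.uIcc α β = Set.Icc α β := Set.uIcc_of_le hab
  -- continuity
  have hScont : ContinuousOn S (Set.Icc α β) :=
    fun x hx => (hS x hx).continuousAt.continuousWithinAt
  have hgcont : ContinuousOn g (Set.Icc α β) :=
    fun x hx => (hg x hx).continuousAt.continuousWithinAt
  -- the multiplier function and its derivative
  set G : ℝ → ℝ := fun x => g' x * ‖S x‖ ^ 2 + g x * (2 * (inner ℝ (S x) (S' x) : ℝ)) with hGdef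
  have hF : ∀ x ∈ Set.Icc α β, HasDerivAt (fun y => g y * ‖S y‖ ^ 2) (G x) x := by
    intro x hx
    exact (hg x hx).mul (hS x hx).norm_sq
  have hGcont : ContinuousOn G (Set.Icc α β) := by
    apply (hg'c.mul ((hScont.norm).pow 2)).add
    exact hgcont.mul (continuousOn_const.mul (hScont.inner hS'c))
  have hII : ∀ {F : ℝ → ℝ}, ContinuousOn F (Set.Icc α β) → IntervalIntegrable F volume α β := by
    intro F hF
    apply hF.mono ?_ |>.intervalIntegrable
    rw [hicc]
  have hGint : IntervalIntegrable G volume α β := hII hGcont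
  -- FTC
  have hFTC : ∫ x in α..β, G x = g β * ‖S β‖ ^ 2 - g α * ‖S α‖ ^ 2 := by
    apply intervalIntegral.integral_eq_sub_of_hasDerivAt _ hGint
    intro x hx
    exact hF x (hicc ▸ hx)
  have hkey : ‖S β‖ ^ 2 + ‖S α‖ ^ 2 = ∫ x in α..β, -G x := by
    rw [intervalIntegral.integral_neg, hFTC, hgα, hgβ]; ring
  -- nonnegativity of Mg
  have hMg0 : 0 ≤ Mg := le_trans (abs_nonneg _) (hMg.2 ⟨α, Set.left_mem_Icc.2 hab, rfl⟩)
  -- pointwise bound of -G on Ioo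
  have hbound : ∀ x ∈ Set.Ioo α β,
      -G x ≤ Mg' * ‖S x‖ ^ 2 + 2 * |lam| * Mg * (‖S x‖ * ‖v x‖)
        + 2 * c₀ * Mg * (‖S x‖ * ‖z x‖) + 2 * Mg * (‖S x‖ * ‖f x‖) := by
    intro x hx
    have hxI : x ∈ Set.Icc α β := Set.Ioo_subset_Icc_self hx
    have hg'le : |g' x| ≤ Mg' := hMg'.2 ⟨x, hxI, rfl⟩
    have hgle : |g x| ≤ Mg := hMg.2 ⟨x, hxI, rfl⟩
    have hS'eq : S' x = Complex.I * (lam : ℂ) * v x + (c₀ : ℂ) * z x - f x := by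
      have h := heq x hx; linear_combination -h
    have hS'norm : ‖S' x‖ ≤ |lam| * ‖v x‖ + c₀ * ‖z x‖ + ‖f x‖ := by
      rw [hS'eq]
      calc ‖Complex.I * (lam : ℂ) * v x + (c₀ : ℂ) * z x - f x‖
          ≤ ‖Complex.I * (lam : ℂ) * v x + (c₀ : ℂ) * z x‖ + ‖f x‖ := norm_sub_le _ _
        _ ≤ ‖Complex.I * (lam : ℂ) * v x‖ + ‖(c₀ : ℂ) * z x‖ + ‖f x‖ :=
            add_le_add_left (norm_add_le _ _) _
        _ = |lam| * ‖v x‖ + c₀ * ‖z x‖ + ‖f x‖ := by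
            rw [norm_mul, norm_mul, norm_mul, Complex.norm_I, one_mul,
              Complex.norm_real, Real.norm_eq_abs, Complex.norm_real,
              Real.norm_eq_abs, abs_of_pos hc₀]
    have hinner : |(inner ℝ (S x) (S' x) : ℝ)| ≤ ‖S x‖ * ‖S' x‖ := abs_real_inner_le_norm _ _
    have h1 : -G x ≤ |g' x| * ‖S x‖ ^ 2 + |g x| * (2 * (‖S x‖ * ‖S' x‖)) := by
      refine (neg_le_abs _).trans ?_
      rw [hGdef]
      refine (abs_add_le _ _).trans (add_le_add ?_ ?_)
      · rw [_root_.abs_mul, _root_.abs_of_nonneg (by positivity : (0:ℝ) ≤ ‖S x‖ ^ 2)]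
      · rw [_root_.abs_mul, _root_.abs_mul, _root_.abs_two]
        exact mul_le_mul_of_nonneg_left
          (mul_le_mul_of_nonneg_left hinner (by norm_num)) (abs_nonneg _)
    refine h1.trans ?_
    have h2 : |g' x| * ‖S x‖ ^ 2 ≤ Mg' * ‖S x‖ ^ 2 :=
      mul_le_mul_of_nonneg_right hg'le (by positivity)
    have h3 : |g x| * (2 * (‖S x‖ * ‖S' x‖)) ≤ Mg * (2 * (‖S x‖ * ‖S' x‖)) :=
      mul_le_mul_of_nonneg_right hgle (by positivity)
    refine (add_le_add h2 h3).trans ?_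
    have h4 : Mg * (2 * (‖S x‖ * ‖S' x‖))
        ≤ Mg * (2 * (‖S x‖ * (|lam| * ‖v x‖ + c₀ * ‖z x‖ + ‖f x‖))) := by
      gcongr
    refine (add_le_add_right h4 _).trans (le_of_eq ?_)
    ring
  -- integrability of the RHS integrand
  have hRHScont : ContinuousOn (fun x => Mg' * ‖S x‖ ^ 2 + 2 * |lam| * Mg * (‖S x‖ * ‖v x‖)
      + 2 * c₀ * Mg * (‖S x‖ * ‖z x‖) + 2 * Mg * (‖S x‖ * ‖f x‖)) (Set.Icc α β) :=
    (((continuousOn_const.mul ((hScont.norm).pow 2)).add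
      (continuousOn_const.mul (hScont.norm.mul hvc.norm))).add
      (continuousOn_const.mul (hScont.norm.mul hzc.norm))).add
      (continuousOn_const.mul (hScont.norm.mul hfc.norm))
  -- compare integrals (a.e. on Ioc, since Ioc \ Ioo = {β} is null)
  have hmono : ∫ x in α..β, -G x ≤ ∫ x in α..β,
      (Mg' * ‖S x‖ ^ 2 + 2 * |lam| * Mg * (‖S x‖ * ‖v x‖)
        + 2 * c₀ * Mg * (‖S x‖ * ‖z x‖) + 2 * Mg * (‖S x‖ * ‖f x‖)) := by
    rw [intervalIntegral.integral_of_le hab, intervalIntegral.integral_of_le hab]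
    apply integral_mono_ae
    · exact hGint.neg.1
    · exact (hII hRHScont).1
    · refine (ae_restrict_iff' measurableSet_Ioc).2 ?_
      have hne : ∀ᵐ x : ℝ, x ≠ β := by
        rw [ae_iff]
        simp
      filter_upwards [hne] with x hxne hx
      exact hbound x ⟨hx.1, lt_of_le_of_ne hx.2 hxne⟩
  -- split the RHS integral and apply Cauchy–Schwarz
  have hintS : IntervalIntegrable (fun x => ‖S x‖ ^ 2) volume α β :=
    hII ((hScont.norm).pow 2)
  have hiSv : IntervalIntegrable (fun x => ‖S x‖ * ‖v x‖) volume α β :=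
    hII (hScont.norm.mul hvc.norm)
  have hiSz : IntervalIntegrable (fun x => ‖S x‖ * ‖z x‖) volume α β :=
    hII (hScont.norm.mul hzc.norm)
  have hiSf : IntervalIntegrable (fun x => ‖S x‖ * ‖f x‖) volume α β :=
    hII (hScont.norm.mul hfc.norm)
  have hsplit : ∫ x in α..β,
      (Mg' * ‖S x‖ ^ 2 + 2 * |lam| * Mg * (‖S x‖ * ‖v x‖)
        + 2 * c₀ * Mg * (‖S x‖ * ‖z x‖) + 2 * Mg * (‖S x‖ * ‖f x‖))
      = Mg' * (∫ x in α..β, ‖S x‖ ^ 2)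
        + 2 * |lam| * Mg * (∫ x in α..β, ‖S x‖ * ‖v x‖)
        + 2 * c₀ * Mg * (∫ x in α..β, ‖S x‖ * ‖z x‖)
        + 2 * Mg * (∫ x in α..β, ‖S x‖ * ‖f x‖) := by
    rw [intervalIntegral.integral_add (((hintS.const_mul _).add (hiSv.const_mul _)).add
        (hiSz.const_mul _)) (hiSf.const_mul _),
      intervalIntegral.integral_add ((hintS.const_mul _).add (hiSv.const_mul _))
        (hiSz.const_mul _),
      intervalIntegral.integral_add (hintS.const_mul _) (hiSv.const_mul _),
      intervalIntegral.integral_const_mul, intervalIntegral.integral_const_mul,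
      intervalIntegral.integral_const_mul, intervalIntegral.integral_const_mul]
  rw [hkey]
  refine hmono.trans ?_
  rw [hsplit]
  have csv := cs_int hab hScont hvc
  have csz := cs_int hab hScont hzc
  have csf := cs_int hab hScont hfc
  have hlam0 : (0:ℝ) ≤ 2 * |lam| * Mg := by positivity
  have hc0' : (0:ℝ) ≤ 2 * c₀ * Mg := by positivity
  have hMg2 : (0:ℝ) ≤ 2 * Mg := by positivity
  calc Mg' * (∫ x in α..β, ‖S x‖ ^ 2)
        + 2 * |lam| * Mg * (∫ x in α..β, ‖S x‖ * ‖v x‖)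
        + 2 * c₀ * Mg * (∫ x in α..β, ‖S x‖ * ‖z x‖)
        + 2 * Mg * (∫ x in α..β, ‖S x‖ * ‖f x‖)
      ≤ Mg' * (∫ x in α..β, ‖S x‖ ^ 2)
        + 2 * |lam| * Mg * (Real.sqrt (∫ x in α..β, ‖S x‖ ^ 2)
            * Real.sqrt (∫ x in α..β, ‖v x‖ ^ 2))
        + 2 * c₀ * Mg * (Real.sqrt (∫ x in α..β, ‖S x‖ ^ 2)
            * Real.sqrt (∫ x in α..β, ‖z x‖ ^ 2))
        + 2 * Mg * (Real.sqrt (∫ x in α..β, ‖S x‖ ^ 2)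
            * Real.sqrt (∫ x in α..β, ‖f x‖ ^ 2)) := by
        refine add_le_add (add_le_add (add_le_add le_rfl ?_) ?_) ?_
        · exact mul_le_mul_of_nonneg_left csv hlam0
        · exact mul_le_mul_of_nonneg_left csz hc0'
        · exact mul_le_mul_of_nonneg_left csf hMg2
    _ = Mg' * (∫ x in α..β, ‖S x‖ ^ 2)
        + 2 * |lam| * Mg * Real.sqrt (∫ x in α..β, ‖S x‖ ^ 2)
            * Real.sqrt (∫ x in α..β, ‖v x‖ ^ 2)
        + 2 * c₀ * Mg * Real.sqrt (∫ x in α..β, ‖S x‖ ^ 2)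
            * Real.sqrt (∫ x in α..β, ‖z x‖ ^ 2)
        + 2 * Mg * Real.sqrt (∫ x in α..β, ‖S x‖ ^ 2)
            * Real.sqrt (∫ x in α..β, ‖f x‖ ^ 2) := by ring
end
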